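/- For every unit vector m̂ ∈ ℝ³ and each choice of sign ±, ∫_{S²} 1_{±⟨m̂,n⟩>0} Π_n dσ(n) = (1/2)(I ± (1/2) m̂·σ). That is, the covariant POVM {Π_n} simulates every noisy projective qubit measurement at noise parameter r = 1/2 via the response functions Θ(±m̂·n). -/

import Mathlib

open MeasureTheory Matrix Kronecker
open scoped RealInnerProductSpace ENNReal ComplexOrder

noncomputable section

/-- 2×2 complex matrices (qubit operators). -/
abbrev Mat2 := Matrix (Fin 2) (Fin 2) ℂ
/-- 4×4 complex matrices indexed by two qubits. -/
abbrev Mat4 := Matrix (Fin 2 × Fin 2) (Fin 2 × Fin 2) ℂ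
/-- ℝ³ with the Euclidean norm. -/
abbrev E3 := EuclideanSpace ℝ (Fin 3)

/-- Pauli matrix σx. -/
def sx : Mat2 := !![0, 1; 1, 0]
/-- Pauli matrix σy. -/
def sy : Mat2 := !![0, -Complex.I; Complex.I, 0]
/-- Pauli matrix σz. -/
def sz : Mat2 := !![1, 0; 0, -1]

/-- Pauli vector `v · σ = v₁ σx + v₂ σy + v₃ σz`. -/
def dotS (v : E3) : Mat2 := (v 0 : ℂ) • sx + (v 1 : ℂ) • sy + (v 2 : ℂ) • sz

/-- The singlet state vector `|Ψ⁻⟩ = (|01⟩ - |10⟩)/√2`. -/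
def psiMinus : Fin 2 × Fin 2 → ℂ := fun p =>
  if p = (0, 1) then (1 : ℂ) / Real.sqrt 2 else if p = (1, 0) then -(1 : ℂ) / Real.sqrt 2 else 0

/-- The projector `|Ψ⁻⟩⟨Ψ⁻|`. -/
def psiProj : Mat4 := Matrix.of fun p q => psiMinus p * star (psiMinus q)

/-- The two-qubit Werner state `ρ_W(r) = r |Ψ⁻⟩⟨Ψ⁻| + (1-r) I/4`. -/
def werner (r : ℝ) : Mat4 := (r : ℂ) • psiProj + (((1 - r : ℝ) : ℂ) / 4) • (1 : Mat4)

/-- Partial trace over the first qubit: `(Tr_A X)_{jk} = Σ_i X_{(i,j),(i,k)}`. -/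
def ptraceA (X : Mat4) : Mat2 := Matrix.of fun j k => ∑ i : Fin 2, X (i, j) (i, k)

/-- The unit sphere S² in ℝ³. -/
abbrev S2 := Metric.sphere (0 : E3) 1

/-- The surface measure on the unit sphere (total mass 4π). -/
def sphereMeasure : Measure S2 := (volume : Measure E3).toSphere

/-- The covariant POVM density `Π_n = (1/(4π))(I + n·σ)`. -/
def Pn (n : E3) : Mat2 := ((4 * Real.pi)⁻¹ : ℝ) • ((1 : Mat2) + dotS n)

open MeasureTheory Measure Set
section Polar

lemma polar (f : S2 → ℂ) (h : ℝ → ℂ) (G : E3 → ℂ)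
    (hG : ∀ (n : S2) (r : ℝ), 0 < r → G (r • (n : E3)) = f n * h r) :
    ∫ x : E3, G x = (∫ n, f n ∂sphereMeasure) * ∫ r in Set.Ioi (0:ℝ), r ^ 2 • h r := by
  have hdim : Module.finrank ℝ E3 = 3 := by simp [finrank_euclideanSpace]
  have h1 : ∫ x : E3, G x
      = ∫ x : ({(0:E3)}ᶜ : Set E3), G (x : E3) ∂((volume : Measure E3).comap Subtype.val) := by
    rw [integral_subtype_comap (measurableSet_singleton _).compl,
      MeasureTheory.restrict_compl_singleton]
  have h2 := ((volume : Measure E3).measurePreserving_homeomorphUnitSphereProd).integral_comp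
      (Homeomorph.measurableEmbedding _) (fun p : S2 × Set.Ioi (0:ℝ) => f p.1 * h p.2)
  rw [hdim] at h2
  have h3 : ∀ x : ({(0:E3)}ᶜ : Set E3),
      f ((homeomorphUnitSphereProd E3 x).1) * h ((homeomorphUnitSphereProd E3 x).2 : ℝ) = G x := by
    intro x
    have hx : (x : E3) ≠ 0 := x.2
    have hnorm : ‖(x:E3)‖ ≠ 0 := norm_ne_zero_iff.2 hx
    have h5 := hG ((homeomorphUnitSphereProd E3 x).1) ‖(x:E3)‖ (norm_pos_iff.2 hx)
    rw [homeomorphUnitSphereProd_apply_fst_coe, smul_inv_smul₀ hnorm] at h5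
    rw [homeomorphUnitSphereProd_apply_snd_coe, ← h5]
  have h4 : ∫ r : Set.Ioi (0:ℝ), h r ∂(Measure.volumeIoiPow 2)
      = ∫ r in Set.Ioi (0:ℝ), r ^ 2 • h r := by
    simp only [Measure.volumeIoiPow, ENNReal.ofReal]
    rw [integral_withDensity_eq_integral_smul
        ((measurable_subtype_coe.pow_const 2).real_toNNReal) (fun r : Set.Ioi (0:ℝ) => h r),
      integral_subtype_comap measurableSet_Ioi (fun a : ℝ => Real.toNNReal (a ^ 2) • h a),
      setIntegral_congr_fun measurableSet_Ioi (fun x hx => ?_)]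
    rw [NNReal.smul_def, Real.coe_toNNReal _ (pow_nonneg hx.out.le _)]
  calc ∫ x : E3, G x
      = ∫ x : ({(0:E3)}ᶜ : Set E3),
          f ((homeomorphUnitSphereProd E3 x).1) * h ((homeomorphUnitSphereProd E3 x).2 : ℝ)
          ∂((volume : Measure E3).comap Subtype.val) := by
        rw [h1]; exact (integral_congr_ae (Filter.Eventually.of_forall fun x => (h3 x).symm))
    _ = ∫ p : S2 × Set.Ioi (0:ℝ), f p.1 * h p.2
          ∂((volume : Measure E3).toSphere.prod (Measure.volumeIoiPow 2)) := h2
    _ = (∫ n, f n ∂sphereMeasure) * ∫ r : Set.Ioi (0:ℝ), h r ∂(Measure.volumeIoiPow 2) := by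
        rw [sphereMeasure]; exact integral_prod_mul f (fun r : Set.Ioi (0:ℝ) => h r)
    _ = _ := by rw [h4]
end Polar
section Radial
open Real

lemma Gamma_three_halves : Real.Gamma (3/2) = √π / 2 := by
  have h := Real.Gamma_add_one (s := 1/2) (by norm_num)
  rw [show (1:ℝ)/2 + 1 = 3/2 by norm_num] at h
  rw [h, Real.Gamma_one_half_eq]; ring

lemma radR_two : ∫ r in Set.Ioi (0:ℝ), r ^ 2 * Real.exp (-r^2) = √π/4 := by
  have h := integral_rpow_mul_exp_neg_rpow (p := 2) (q := 2) (by norm_num) (by norm_num)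
  simp_rw [Real.rpow_two] at h
  rw [h, show ((2:ℝ)+1)/2 = 3/2 by norm_num, Gamma_three_halves]; ring

lemma radR_one : ∫ r in Set.Ioi (0:ℝ), r * Real.exp (-r^2) = 1/2 := by
  have h := integral_rpow_mul_exp_neg_rpow (p := 2) (q := 1) (by norm_num) (by norm_num)
  simp_rw [Real.rpow_two, Real.rpow_one] at h
  rw [h, show ((1:ℝ)+1)/2 = 1 by norm_num, Real.Gamma_one]; ring

lemma radR_three : ∫ r in Set.Ioi (0:ℝ), r ^ 2 * (r * Real.exp (-r^2)) = 1/2 := by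
  have h := integral_rpow_mul_exp_neg_rpow (p := 2) (q := 3) (by norm_num) (by norm_num)
  rw [show ((3:ℝ)+1)/2 = 2 by norm_num] at h
  simp_rw [Real.rpow_two, show ∀ x:ℝ, x ^ (3:ℝ) = x^2*x from fun x => by
      rw [show (3:ℝ)=((3:ℕ):ℝ) by norm_num, Real.rpow_natCast]; ring] at h
  rw [show Real.Gamma 2 = 1 by simpa using Real.Gamma_ofNat_eq_factorial 1] at h
  rw [show (1:ℝ)/2 * 1 = 1/2 by norm_num] at h
  rw [← h]
  exact setIntegral_congr_fun measurableSet_Ioi (fun x _ => by ring)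

lemma integral_coe {α : Type*} [MeasurableSpace α] (μ : Measure α) (F : α → ℝ) :
    ∫ x, ((F x : ℝ) : ℂ) ∂μ = ((∫ x, F x ∂μ : ℝ) : ℂ) := integral_ofReal

lemma radC (g : ℝ → ℝ) (v : ℝ) (hg : ∫ r in Set.Ioi (0:ℝ), r^2 * g r = v) :
    ∫ r in Set.Ioi (0:ℝ), r ^ 2 • ((g r : ℝ) : ℂ) = (v : ℂ) := by
  have h : ∀ r : ℝ, r ^ 2 • ((g r : ℝ) : ℂ) = (((r^2 * g r : ℝ)) : ℂ) := fun r => by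
    rw [Complex.real_smul, Complex.ofReal_mul]
  simp_rw [h]
  rw [integral_coe]
  rw [hg]

end Radial
section Vol
open Real

lemma norm_sq_E3 (x : E3) : ‖x‖^2 = ∑ i, (x i)^2 := by
  rw [EuclideanSpace.norm_eq, Real.sq_sqrt (by positivity)]
  simp [sq_abs]

lemma gaussE3 : ∫ x : E3, Real.exp (-‖x‖^2) = π * √π := by
  have h := GaussianFourier.integral_rexp_neg_mul_sq_norm (V := E3) (b := 1) one_pos
  simp only [neg_mul, one_mul, finrank_euclideanSpace, Fintype.card_fin, div_one] at h
  rw [h, show ((3:ℕ):ℝ)/2 = 1 + 1/2 by norm_num, Real.rpow_add pi_pos, Real.rpow_one,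
    ← Real.sqrt_eq_rpow]

lemma gaussInt : Integrable (fun x : E3 => Real.exp (-‖x‖^2)) := by
  have h := (GaussianFourier.integrable_cexp_neg_mul_sq_norm_add (V := E3) (b := 1)
      (by norm_num) 0 0).norm
  have : ∀ x : E3, ‖Complex.exp (-(1:ℂ) * (‖x‖:ℂ)^2 + 0 * (⟪(0:E3), x⟫ : ℝ))‖
      = Real.exp (-‖x‖^2) := by
    intro x
    rw [Complex.norm_exp]
    simp [← Complex.ofReal_pow]
  simpa only [this] using h

lemma E3_prod_integral (g : Fin 3 → ℝ → ℝ) :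
    ∫ x : E3, (∏ i, g i (x i)) = ∏ i, ∫ t : ℝ, g i t := by
  rw [← MeasureTheory.integral_fintype_prod_eq_prod (f := g), ← volume_pi,
    ← (EuclideanSpace.volume_preserving_symm_measurableEquiv_toLp (Fin 3)).integral_comp'
      (fun y : Fin 3 → ℝ => ∏ i, g i (y i))]
  rfl

lemma gauss1D : ∫ t : ℝ, Real.exp (-t^2) = √π := by
  have h := integral_gaussian 1
  simpa using h

lemma gaussHalf1D : ∫ t : ℝ, (if 0 < t then (1:ℝ) else 0) * (t * Real.exp (-t^2)) = 1/2 := by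
  have h : (fun t:ℝ => (if 0 < t then (1:ℝ) else 0) * (t * Real.exp (-t^2)))
      = Set.indicator (Set.Ioi 0) (fun t => t * Real.exp (-t^2)) := by
    ext t; by_cases h : 0 < t <;> simp [Set.indicator, h, Set.mem_Ioi]
  rw [h, integral_indicator measurableSet_Ioi, radR_one]

end Vol
section Vol2
open Real

lemma aesm_piece (m : E3) (g : E3 → ℝ) (hg : Continuous g) :
    AEStronglyMeasurable (fun x : E3 => (if 0 < (⟪m, x⟫:ℝ) then (1:ℝ) else 0) * g x) volume := by
  apply AEStronglyMeasurable.mul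
  · exact ((measurable_const.ite
      (isOpen_lt continuous_const (Continuous.inner continuous_const continuous_id)).measurableSet
      measurable_const)).aestronglyMeasurable
  · exact hg.aestronglyMeasurable

lemma volC (m w : E3) (hw : (⟪m, w⟫:ℝ) = 0) :
    ∫ x : E3, (if 0 < (⟪m, x⟫:ℝ) then (1:ℝ) else 0) * ((⟪w, x⟫:ℝ) * Real.exp (-‖x‖^2)) = 0 := by
  rcases eq_or_ne w 0 with rfl | hw0
  · simp
  set S := Submodule.reflection (ℝ ∙ w)ᗮ with hS
  have hSw : S w = -w := Submodule.reflection_orthogonalComplement_singleton_eq_neg w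
  have hSm : S m = m := Submodule.reflection_mem_subspace_eq_self
    (Submodule.mem_orthogonal_singleton_iff_inner_left.2 hw)
  have hmp := S.measurePreserving (F := E3)
  have h1 := hmp.integral_comp S.toHomeomorph.measurableEmbedding
    (fun x : E3 => (if 0 < (⟪m, x⟫:ℝ) then (1:ℝ) else 0) * ((⟪w, x⟫:ℝ) * Real.exp (-‖x‖^2)))
  have h2 : ∀ x : E3, (if 0 < (⟪m, S x⟫:ℝ) then (1:ℝ) else 0) * ((⟪w, S x⟫:ℝ) * Real.exp (-‖S x‖^2))
      = - ((if 0 < (⟪m, x⟫:ℝ) then (1:ℝ) else 0) * ((⟪w, x⟫:ℝ) * Real.exp (-‖x‖^2))) := by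
    intro x
    have e1 : (⟪m, S x⟫:ℝ) = ⟪m, x⟫ := by
      conv_lhs => rw [← hSm]
      rw [LinearIsometryEquiv.inner_map_map]
    have e2 : (⟪w, S x⟫:ℝ) = -⟪w, x⟫ := by
      have h3 : (⟪S w, S x⟫:ℝ) = ⟪w, x⟫ := LinearIsometryEquiv.inner_map_map S w x
      rw [hSw, inner_neg_left] at h3
      linarith
    rw [e1, e2, S.norm_map]
    ring
  simp_rw [h2] at h1
  rw [integral_neg] at h1
  linarith [h1]

lemma volB (m : E3) (hm : ‖m‖ = 1) :
    ∫ x : E3, (if 0 < (⟪m, x⟫:ℝ) then (1:ℝ) else 0) * ((⟪m, x⟫:ℝ) * Real.exp (-‖x‖^2))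
      = π / 2 := by
  set e2 : E3 := EuclideanSpace.single (2 : Fin 3) (1:ℝ) with he2def
  have he2 : ‖e2‖ = 1 := by simp [he2def, EuclideanSpace.norm_single]
  set R := Submodule.reflection (ℝ ∙ (m - e2))ᗮ with hR
  have hRm : R m = e2 := Submodule.reflection_sub (by rw [hm, he2])
  have hRe2 : R e2 = m := by rw [← hRm, Submodule.reflection_reflection]
  have hmp := R.measurePreserving (F := E3)
  rw [← hmp.integral_comp R.toHomeomorph.measurableEmbedding]
  have h2 : ∀ x : E3,
      (if 0 < (⟪m, R x⟫:ℝ) then (1:ℝ) else 0) * ((⟪m, R x⟫:ℝ) * Real.exp (-‖R x‖^2))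
      = ∏ i, (fun i t => if i = (2 : Fin 3) then
          (if 0 < t then (1:ℝ) else 0) * (t * Real.exp (-t^2)) else Real.exp (-t^2)) i (x i) := by
    intro x
    have e1 : (⟪m, R x⟫:ℝ) = x 2 := by
      conv_lhs => rw [← hRe2]
      rw [LinearIsometryEquiv.inner_map_map]
      simp [he2def, EuclideanSpace.inner_single_left]
    have hprod : (∏ i, (fun i t => if i = (2 : Fin 3) then
          (if 0 < t then (1:ℝ) else 0) * (t * Real.exp (-t^2)) else Real.exp (-t^2)) i (x i))
        = Real.exp (-x 0^2) * Real.exp (-x 1^2)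
            * ((if 0 < x 2 then (1:ℝ) else 0) * (x 2 * Real.exp (-x 2^2))) := by
      rw [Fin.prod_univ_three]
      simp only [if_neg (show (0:Fin 3) ≠ 2 by decide), if_neg (show (1:Fin 3) ≠ 2 by decide),
        if_pos rfl, if_true]
    rw [e1, R.norm_map, hprod, norm_sq_E3, Fin.sum_univ_three]
    by_cases h : 0 < x 2 <;>
      simp only [h, if_true, if_false] <;>
      · rw [show -(x 0^2 + x 1^2 + x 2^2) = -x 0^2 + (-x 1^2 + -x 2^2) by ring,
          Real.exp_add, Real.exp_add]
        ring
  simp_rw [h2]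
  rw [E3_prod_integral (fun i t => if i = (2 : Fin 3) then
      (if 0 < t then (1:ℝ) else 0) * (t * Real.exp (-t^2)) else Real.exp (-t^2)),
    Fin.prod_univ_three]
  simp only [if_neg (show (0:Fin 3) ≠ 2 by decide), if_neg (show (1:Fin 3) ≠ 2 by decide),
    if_pos rfl, if_true]
  rw [gauss1D, gaussHalf1D, Real.mul_self_sqrt pi_pos.le]
  ring
end Vol2
section Vol3
open Real

lemma intF (m : E3) :
    Integrable (fun x : E3 => (if 0 < (⟪m, x⟫:ℝ) then (1:ℝ) else 0) * Real.exp (-‖x‖^2)) := by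
  refine gaussInt.mono' (aesm_piece m _ (by continuity)) ?_
  filter_upwards with x
  rw [Real.norm_eq_abs, abs_mul]
  by_cases h : 0 < (⟪m, x⟫:ℝ)
  · rw [if_pos h, abs_one, one_mul, abs_of_nonneg (Real.exp_pos _).le]
  · rw [if_neg h, abs_zero, zero_mul]; positivity

lemma null_hyperplane (m : E3) (hm : ‖m‖ = 1) :
    (volume : Measure E3) {x : E3 | (⟪m, x⟫:ℝ) = 0} = 0 := by
  have hker : {x : E3 | (⟪m, x⟫:ℝ) = 0} = ((LinearMap.ker ((innerSL ℝ m : E3 →L[ℝ] ℝ) : E3 →ₗ[ℝ] ℝ) : Submodule ℝ E3) : Set E3) := by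
    ext x; simp [LinearMap.mem_ker]
  rw [hker]
  refine Measure.addHaar_submodule _ _ (fun htop => ?_)
  have hmem : m ∈ LinearMap.ker ((innerSL ℝ m : E3 →L[ℝ] ℝ) : E3 →ₗ[ℝ] ℝ) := htop ▸ Submodule.mem_top
  have h0 : (⟪m, m⟫:ℝ) = 0 := hmem
  rw [real_inner_self_eq_norm_sq, hm] at h0
  norm_num at h0

lemma volA (m : E3) (hm : ‖m‖ = 1) :
    ∫ x : E3, (if 0 < (⟪m, x⟫:ℝ) then (1:ℝ) else 0) * Real.exp (-‖x‖^2) = π * √π / 2 := by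
  set F := fun x : E3 => (if 0 < (⟪m, x⟫:ℝ) then (1:ℝ) else 0) * Real.exp (-‖x‖^2) with hF
  set F' := fun x : E3 => (if (⟪m, x⟫:ℝ) < 0 then (1:ℝ) else 0) * Real.exp (-‖x‖^2) with hF'
  have hFint : Integrable F := intF m
  have hneg : ∀ x : E3, F (-x) = F' x := by
    intro x
    simp only [hF, hF', inner_neg_right, norm_neg, neg_pos]
  have hmp := (LinearIsometryEquiv.neg ℝ (E := E3)).measurePreserving
  have h1 : ∫ x : E3, F x = ∫ x : E3, F' x := by
    rw [← hmp.integral_comp (LinearIsometryEquiv.neg ℝ (E := E3)).toHomeomorph.measurableEmbedding F]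
    exact integral_congr_ae (Filter.Eventually.of_forall fun x => hneg x)
  have hF'int : Integrable F' := by
    refine gaussInt.mono' ?_ ?_
    · apply AEStronglyMeasurable.mul
      · exact ((measurable_const.ite
          (isOpen_lt (Continuous.inner continuous_const continuous_id) continuous_const).measurableSet
          measurable_const)).aestronglyMeasurable
      · exact (Real.continuous_exp.comp (by continuity)).aestronglyMeasurable
    · filter_upwards with x
      rw [hF', Real.norm_eq_abs, abs_mul]
      by_cases h : (⟪m, x⟫:ℝ) < 0
      · rw [if_pos h, abs_one, one_mul, abs_of_nonneg (Real.exp_pos _).le]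
      · rw [if_neg h, abs_zero, zero_mul]; positivity
  have hzero : ∫ x : E3, (if (⟪m, x⟫:ℝ) = 0 then Real.exp (-‖x‖^2) else 0) = 0 := by
    have h0 : ∀ᵐ x : E3, ¬ ((⟪m, x⟫:ℝ) = 0) := by
      rw [ae_iff]
      simpa using null_hyperplane m hm
    refine integral_eq_zero_of_ae ?_
    filter_upwards [h0] with x hx
    rw [if_neg hx]; rfl
  have hsum : ∀ x : E3, F x + F' x
      = Real.exp (-‖x‖^2) - (if (⟪m, x⟫:ℝ) = 0 then Real.exp (-‖x‖^2) else 0) := by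
    intro x
    simp only [hF, hF']
    rcases lt_trichotomy ((⟪m, x⟫:ℝ)) 0 with h | h | h
    · rw [if_neg (asymm h), if_pos h, if_neg (ne_of_lt h)]; ring
    · rw [if_neg (by rw [h]; exact lt_irrefl 0), if_neg (by rw [h]; exact lt_irrefl 0),
        if_pos h]; ring
    · rw [if_pos h, if_neg (asymm h), if_neg (ne_of_gt h)]; ring
  have h2 : (∫ x : E3, F x) + ∫ x : E3, F' x = π * √π := by
    rw [← integral_add hFint hF'int]
    simp_rw [hsum]
    rw [integral_sub gaussInt ?hsub, hzero, gaussE3, sub_zero]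
    case hsub =>
      refine gaussInt.mono' ?_ ?_
      · refine (Measurable.ite ?_ (by fun_prop) measurable_const).aestronglyMeasurable
        exact measurableSet_eq_fun (Continuous.inner continuous_const continuous_id).measurable
          measurable_const
      · filter_upwards with x
        by_cases h : (⟪m, x⟫:ℝ) = 0
        · rw [if_pos h, Real.norm_eq_abs, abs_of_nonneg (Real.exp_pos _).le]
        · rw [if_neg h, norm_zero]; positivity
  rw [← h1] at h2
  have h3 : ∫ x : E3, F x = π * √π / 2 := by linarith
  exact h3
end Vol3
section Sphere
open Real

instance : IsFiniteMeasure sphereMeasure := by unfold sphereMeasure; infer_instance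

lemma sphere_norm_one (n : S2) : ‖(n:E3)‖ = 1 := mem_sphere_zero_iff_norm.mp n.2

lemma smul_pos_iff (r : ℝ) (hr : 0 < r) (t : ℝ) : (0 < r * t) ↔ (0 < t) := by
  constructor
  · intro h; nlinarith
  · intro h; exact mul_pos hr h

lemma sphere_ind (m : E3) (hm : ‖m‖ = 1) :
    ∫ n : S2, (if 0 < (⟪m, (n:E3)⟫:ℝ) then (1:ℂ) else 0) ∂sphereMeasure
      = ((2*Real.pi : ℝ) : ℂ) := by
  have hpolar := polar (fun n : S2 => if 0 < (⟪m, (n:E3)⟫:ℝ) then (1:ℂ) else 0)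
      (fun r => ((Real.exp (-r^2) : ℝ) : ℂ))
      (fun x => (((if 0 < (⟪m, x⟫:ℝ) then (1:ℝ) else 0) * Real.exp (-‖x‖^2) : ℝ) : ℂ))
      (fun n r hr => by
        have h1 : (⟪m, r • (n:E3)⟫:ℝ) = r * ⟪m, (n:E3)⟫ := real_inner_smul_right m _ r
        have h2 : ‖r • (n:E3)‖ = r := by
          rw [norm_smul, sphere_norm_one n, Real.norm_eq_abs, abs_of_pos hr, mul_one]
        rw [h1, h2]
        by_cases hp : 0 < (⟪m,(n:E3)⟫:ℝ)
        · rw [if_pos ((smul_pos_iff r hr _).2 hp), if_pos hp]; push_cast; ring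
        · rw [if_neg (fun hcon => hp ((smul_pos_iff r hr _).1 hcon)), if_neg hp]
          push_cast; ring)
  rw [integral_coe, volA m hm, radC _ _ radR_two] at hpolar
  have hc : ((Real.sqrt Real.pi/4 : ℝ):ℂ) ≠ 0 := by
    rw [Complex.ofReal_ne_zero]
    positivity
  have hid : ((2*Real.pi:ℝ):ℂ) * ((Real.sqrt Real.pi/4 : ℝ):ℂ)
      = ((Real.pi * Real.sqrt Real.pi / 2 : ℝ):ℂ) := by
    rw [← Complex.ofReal_mul]
    exact congrArg _ (by ring)
  exact mul_right_cancel₀ hc (hpolar.symm.trans hid.symm)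

lemma sphere_linear (m v : E3) (hval : ∫ x : E3,
      (if 0 < (⟪m, x⟫:ℝ) then (1:ℝ) else 0) * ((⟪v, x⟫:ℝ) * Real.exp (-‖x‖^2)) = Real.pi / 2) :
    ∫ n : S2, (if 0 < (⟪m, (n:E3)⟫:ℝ) then (1:ℂ) else 0) * ((⟪v, (n:E3)⟫:ℝ):ℂ) ∂sphereMeasure
      = ((Real.pi : ℝ) : ℂ) := by
  have hpolar := polar
      (fun n : S2 => (if 0 < (⟪m, (n:E3)⟫:ℝ) then (1:ℂ) else 0) * ((⟪v, (n:E3)⟫:ℝ):ℂ))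
      (fun r => ((r * Real.exp (-r^2) : ℝ) : ℂ))
      (fun x => (((if 0 < (⟪m, x⟫:ℝ) then (1:ℝ) else 0) * ((⟪v, x⟫:ℝ) * Real.exp (-‖x‖^2)) : ℝ) : ℂ))
      (fun n r hr => by
        have h1 : (⟪m, r • (n:E3)⟫:ℝ) = r * ⟪m, (n:E3)⟫ := real_inner_smul_right m _ r
        have h1' : (⟪v, r • (n:E3)⟫:ℝ) = r * ⟪v, (n:E3)⟫ := real_inner_smul_right v _ r
        have h2 : ‖r • (n:E3)‖ = r := by
          rw [norm_smul, sphere_norm_one n, Real.norm_eq_abs, abs_of_pos hr, mul_one]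
        rw [h1, h1', h2]
        by_cases hp : 0 < (⟪m,(n:E3)⟫:ℝ)
        · rw [if_pos ((smul_pos_iff r hr _).2 hp), if_pos hp]; push_cast; ring
        · rw [if_neg (fun hcon => hp ((smul_pos_iff r hr _).1 hcon)), if_neg hp]
          push_cast; ring)
  rw [integral_coe, hval, radC _ _ radR_three] at hpolar
  have hc : (((1:ℝ)/2 : ℝ):ℂ) ≠ 0 := by
    rw [Complex.ofReal_ne_zero]; norm_num
  have hid : ((Real.pi:ℝ):ℂ) * (((1:ℝ)/2 : ℝ):ℂ) = ((Real.pi / 2 : ℝ):ℂ) := by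
    rw [← Complex.ofReal_mul]
    exact congrArg _ (by ring)
  exact mul_right_cancel₀ hc (hpolar.symm.trans hid.symm)

lemma sphere_perp (m w : E3) (hw : (⟪m, w⟫:ℝ) = 0) :
    ∫ n : S2, (if 0 < (⟪m, (n:E3)⟫:ℝ) then (1:ℂ) else 0) * ((⟪w, (n:E3)⟫:ℝ):ℂ) ∂sphereMeasure
      = 0 := by
  have hpolar := polar
      (fun n : S2 => (if 0 < (⟪m, (n:E3)⟫:ℝ) then (1:ℂ) else 0) * ((⟪w, (n:E3)⟫:ℝ):ℂ))
      (fun r => ((r * Real.exp (-r^2) : ℝ) : ℂ))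
      (fun x => (((if 0 < (⟪m, x⟫:ℝ) then (1:ℝ) else 0) * ((⟪w, x⟫:ℝ) * Real.exp (-‖x‖^2)) : ℝ) : ℂ))
      (fun n r hr => by
        have h1 : (⟪m, r • (n:E3)⟫:ℝ) = r * ⟪m, (n:E3)⟫ := real_inner_smul_right m _ r
        have h1' : (⟪w, r • (n:E3)⟫:ℝ) = r * ⟪w, (n:E3)⟫ := real_inner_smul_right w _ r
        have h2 : ‖r • (n:E3)‖ = r := by
          rw [norm_smul, sphere_norm_one n, Real.norm_eq_abs, abs_of_pos hr, mul_one]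
        rw [h1, h1', h2]
        by_cases hp : 0 < (⟪m,(n:E3)⟫:ℝ)
        · rw [if_pos ((smul_pos_iff r hr _).2 hp), if_pos hp]; push_cast; ring
        · rw [if_neg (fun hcon => hp ((smul_pos_iff r hr _).1 hcon)), if_neg hp]
          push_cast; ring)
  rw [integral_coe, volC m w hw, radC _ _ radR_three] at hpolar
  have hc : (((1:ℝ)/2 : ℝ):ℂ) ≠ 0 := by
    rw [Complex.ofReal_ne_zero]; norm_num
  have h0 := hpolar.symm
  rw [Complex.ofReal_zero] at h0
  rcases mul_eq_zero.mp h0 with h | h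
  · exact h
  · exact absurd h hc

end Sphere
section Assemble
open Real

lemma sphere_int_ind (m : E3) :
    Integrable (fun n : S2 => (if 0 < (⟪m,(n:E3)⟫:ℝ) then (1:ℂ) else 0)) sphereMeasure := by
  refine (integrable_const (1:ℝ)).mono' ?_ ?_
  · refine (Measurable.ite ?_ measurable_const measurable_const).aestronglyMeasurable
    exact (isOpen_lt continuous_const
      (Continuous.inner (continuous_const : Continuous fun _ : S2 => m)
        continuous_subtype_val)).measurableSet
  · filter_upwards with n
    by_cases h : 0 < (⟪m,(n:E3)⟫:ℝ)
    · rw [if_pos h, norm_one]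
    · rw [if_neg h, norm_zero]; norm_num

lemma sphere_int_piece (m g : E3) :
    Integrable (fun n : S2 =>
      (if 0 < (⟪m,(n:E3)⟫:ℝ) then (1:ℂ) else 0) * ((⟪g,(n:E3)⟫:ℝ):ℂ)) sphereMeasure := by
  refine (integrable_const (‖g‖:ℝ)).mono' ?_ ?_
  · apply AEStronglyMeasurable.mul
    · refine (Measurable.ite ?_ measurable_const measurable_const).aestronglyMeasurable
      exact (isOpen_lt continuous_const
        (Continuous.inner (continuous_const : Continuous fun _ : S2 => m)
          continuous_subtype_val)).measurableSet
    · exact (Complex.continuous_ofReal.comp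
        (Continuous.inner (continuous_const : Continuous fun _ : S2 => g)
          continuous_subtype_val)).aestronglyMeasurable
  · filter_upwards with n
    rw [norm_mul]
    have hb : ‖((⟪g,(n:E3)⟫:ℝ):ℂ)‖ ≤ ‖g‖ := by
      rw [Complex.norm_real, Real.norm_eq_abs]
      calc |(⟪g,(n:E3)⟫:ℝ)| ≤ ‖g‖ * ‖(n:E3)‖ := abs_real_inner_le_norm g _
      _ = ‖g‖ := by rw [sphere_norm_one, mul_one]
    by_cases h : 0 < (⟪m,(n:E3)⟫:ℝ)
    · rw [if_pos h, norm_one, one_mul]; exact hb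
    · rw [if_neg h, norm_zero, zero_mul]; positivity

lemma sphere_coord (m : E3) (hm : ‖m‖ = 1) (v : E3) :
    ∫ n : S2, (if 0 < (⟪m,(n:E3)⟫:ℝ) then (1:ℂ) else 0) * ((⟪v,(n:E3)⟫:ℝ):ℂ) ∂sphereMeasure
      = ((Real.pi * ⟪v, m⟫ : ℝ):ℂ) := by
  set w : E3 := v - (⟪v,m⟫:ℝ) • m with hwdef
  have hmw : (⟪m, w⟫:ℝ) = 0 := by
    rw [hwdef, inner_sub_right, real_inner_smul_right, real_inner_self_eq_norm_sq, hm,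
      real_inner_comm m v]
    ring
  have hsplit : ∀ n : S2,
      (if 0 < (⟪m,(n:E3)⟫:ℝ) then (1:ℂ) else 0) * ((⟪v,(n:E3)⟫:ℝ):ℂ)
      = (if 0 < (⟪m,(n:E3)⟫:ℝ) then (1:ℂ) else 0) * ((⟪w,(n:E3)⟫:ℝ):ℂ)
        + ((⟪v,m⟫:ℝ):ℂ) * ((if 0 < (⟪m,(n:E3)⟫:ℝ) then (1:ℂ) else 0) * ((⟪m,(n:E3)⟫:ℝ):ℂ)) := by
    intro n
    have hv : (⟪v,(n:E3)⟫:ℝ) = ⟪w,(n:E3)⟫ + ⟪v,m⟫ * ⟪m,(n:E3)⟫ := by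
      rw [hwdef, inner_sub_left, real_inner_smul_left]
      ring
    rw [hv]
    by_cases hp : 0 < (⟪m,(n:E3)⟫:ℝ)
    · rw [if_pos hp]; push_cast; ring
    · rw [if_neg hp]; push_cast; ring
  simp_rw [hsplit]
  rw [integral_add (sphere_int_piece m w) ((sphere_int_piece m m).const_mul _),
    integral_const_mul, sphere_perp m w hmw, sphere_linear m m (volB m hm), zero_add,
    ← Complex.ofReal_mul]
  exact congrArg _ (mul_comm _ _)

lemma master (m : E3) (hm : ‖m‖ = 1) (i j : Fin 2) :
    ∫ n : S2, (if 0 < (⟪m, (n:E3)⟫:ℝ) then (1:ℂ) else 0) * Pn (n:E3) i j ∂sphereMeasure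
      = (1/2 : ℂ) * (1 : Mat2) i j + (1/4 : ℂ) * dotS m i j := by
  have hco : ∀ (k : Fin 3) (y : E3), (⟪EuclideanSpace.single k (1:ℝ), y⟫:ℝ) = y k :=
    fun k y => by rw [EuclideanSpace.inner_single_left]; simp
  have hsplit : ∀ n : S2,
      (if 0 < (⟪m, (n:E3)⟫:ℝ) then (1:ℂ) else 0) * Pn (n:E3) i j
      = (((4*Real.pi)⁻¹:ℝ):ℂ) *
        ((1 : Mat2) i j * (if 0 < (⟪m, (n:E3)⟫:ℝ) then (1:ℂ) else 0)
          + sx i j * ((if 0 < (⟪m, (n:E3)⟫:ℝ) then (1:ℂ) else 0)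
              * ((⟪EuclideanSpace.single 0 (1:ℝ),(n:E3)⟫:ℝ):ℂ))
          + sy i j * ((if 0 < (⟪m, (n:E3)⟫:ℝ) then (1:ℂ) else 0)
              * ((⟪EuclideanSpace.single 1 (1:ℝ),(n:E3)⟫:ℝ):ℂ))
          + sz i j * ((if 0 < (⟪m, (n:E3)⟫:ℝ) then (1:ℂ) else 0)
              * ((⟪EuclideanSpace.single 2 (1:ℝ),(n:E3)⟫:ℝ):ℂ))) := by
    intro n
    simp only [Pn, dotS, Matrix.smul_apply, Matrix.add_apply, smul_eq_mul, Complex.real_smul, hco]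
    ring
  have i0 : Integrable (fun n : S2 =>
      (1 : Mat2) i j * (if 0 < (⟪m, (n:E3)⟫:ℝ) then (1:ℂ) else 0)) sphereMeasure :=
    (sphere_int_ind m).const_mul _
  have i1 : Integrable (fun n : S2 => sx i j * ((if 0 < (⟪m, (n:E3)⟫:ℝ) then (1:ℂ) else 0)
      * ((⟪EuclideanSpace.single 0 (1:ℝ),(n:E3)⟫:ℝ):ℂ))) sphereMeasure :=
    (sphere_int_piece m _).const_mul _
  have i2 : Integrable (fun n : S2 => sy i j * ((if 0 < (⟪m, (n:E3)⟫:ℝ) then (1:ℂ) else 0)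
      * ((⟪EuclideanSpace.single 1 (1:ℝ),(n:E3)⟫:ℝ):ℂ))) sphereMeasure :=
    (sphere_int_piece m _).const_mul _
  have i3 : Integrable (fun n : S2 => sz i j * ((if 0 < (⟪m, (n:E3)⟫:ℝ) then (1:ℂ) else 0)
      * ((⟪EuclideanSpace.single 2 (1:ℝ),(n:E3)⟫:ℝ):ℂ))) sphereMeasure :=
    (sphere_int_piece m _).const_mul _
  have i01 : Integrable (fun n : S2 =>
      (1 : Mat2) i j * (if 0 < (⟪m, (n:E3)⟫:ℝ) then (1:ℂ) else 0)
      + sx i j * ((if 0 < (⟪m, (n:E3)⟫:ℝ) then (1:ℂ) else 0)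
          * ((⟪EuclideanSpace.single 0 (1:ℝ),(n:E3)⟫:ℝ):ℂ))) sphereMeasure := i0.add i1
  have i012 : Integrable (fun n : S2 =>
      ((1 : Mat2) i j * (if 0 < (⟪m, (n:E3)⟫:ℝ) then (1:ℂ) else 0)
      + sx i j * ((if 0 < (⟪m, (n:E3)⟫:ℝ) then (1:ℂ) else 0)
          * ((⟪EuclideanSpace.single 0 (1:ℝ),(n:E3)⟫:ℝ):ℂ)))
      + sy i j * ((if 0 < (⟪m, (n:E3)⟫:ℝ) then (1:ℂ) else 0)
          * ((⟪EuclideanSpace.single 1 (1:ℝ),(n:E3)⟫:ℝ):ℂ))) sphereMeasure := i01.add i2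
  simp_rw [hsplit]
  rw [integral_const_mul, integral_add i012 i3, integral_add i01 i2, integral_add i0 i1,
    integral_const_mul, integral_const_mul, integral_const_mul, integral_const_mul,
    sphere_ind m hm, sphere_coord m hm, sphere_coord m hm, sphere_coord m hm]
  simp only [hco, dotS, Matrix.smul_apply, Matrix.add_apply, smul_eq_mul]
  push_cast
  field_simp
  ring
end Assemble
/-- the covariant POVM simulates every noisy projective measurement at r = 1/2. -/
theorem pvm_simulation (m : E3) (hm : ‖m‖ = 1) :
    (∀ i j : Fin 2,
      (∫ n : S2, (if 0 < ⟪m, (n : E3)⟫ then (1 : ℂ) else 0) * Pn (n : E3) i j ∂sphereMeasure) =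
        ((1/2 : ℂ) • ((1 : Mat2) + (1/2 : ℂ) • dotS m)) i j) ∧
    (∀ i j : Fin 2,
      (∫ n : S2, (if 0 < -⟪m, (n : E3)⟫ then (1 : ℂ) else 0) * Pn (n : E3) i j ∂sphereMeasure) =
        ((1/2 : ℂ) • ((1 : Mat2) - (1/2 : ℂ) • dotS m)) i j) := by
  constructor
  · intro i j
    rw [master m hm i j]
    simp only [Matrix.smul_apply, Matrix.add_apply, smul_eq_mul]
    ring
  · intro i j
    have hneg : ∀ n : S2, (if 0 < -(⟪m,(n:E3)⟫:ℝ) then (1:ℂ) else 0)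
        = (if 0 < (⟪-m,(n:E3)⟫:ℝ) then (1:ℂ) else 0) := fun n => by
      rw [inner_neg_left]
    simp_rw [hneg]
    rw [master (-m) (by rw [norm_neg, hm]) i j]
    have hdot : dotS (-m) i j = - dotS m i j := by
      simp only [dotS, Matrix.add_apply, Matrix.smul_apply, smul_eq_mul, PiLp.neg_apply]
      push_cast
      ring
    rw [hdot]
    simp only [Matrix.smul_apply, Matrix.sub_apply, Matrix.add_apply, smul_eq_mul]
    ring
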